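/- Let M be a real symmetric positive definite block matrix M = [[A, B], [Bᵀ, C]], where A is p×p, C is q×q, and B is p×q. Then A and the Schur complement C − BᵀA⁻¹B are positive definite, and for every index r, ((C − BᵀA⁻¹B)⁻¹)_{rr} ≥ 1 / C_{rr}. -/

import Mathlib

open Matrix

lemma single_quad {q : ℕ} (S : Matrix (Fin q) (Fin q) ℝ) (r : Fin q) :
    (Pi.single r 1 : Fin q → ℝ) ⬝ᵥ S *ᵥ (Pi.single r 1 : Fin q → ℝ) = S r r := by
  simp [mulVec_single]

lemma posDef_inv_diag_ge {q : ℕ} (S : Matrix (Fin q) (Fin q) ℝ) (hS : S.PosDef)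
    (r : Fin q) : 1 / S r r ≤ S⁻¹ r r := by
  have hdet : IsUnit S.det := isUnit_iff_ne_zero.mpr hS.det_pos.ne'
  have hinv : S * S⁻¹ = 1 := S.mul_nonsing_inv hdet
  have hsym : Sᵀ = S := hS.isHermitian
  set u : Fin q → ℝ := Pi.single r 1 with hu
  set w : Fin q → ℝ := S⁻¹ *ᵥ u with hw
  set s : ℝ := S r r with hs
  have hspos : 0 < s := by
    have := hS.dotProduct_mulVec_pos (x := u) (by intro h; have := congrFun h r; simp [hu] at this)
    simpa [single_quad, hu] using this
  have e1 : S *ᵥ w = u := by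
    rw [hw, mulVec_mulVec, hinv, one_mulVec]
  have e2 : u ⬝ᵥ S *ᵥ u = s := single_quad S r
  have e3 : w ⬝ᵥ u = S⁻¹ r r := by
    simp [hw, hu, mulVec_single]
  have e4 : u ⬝ᵥ u = (1 : ℝ) := by simp [hu]
  have e5 : w ⬝ᵥ S *ᵥ u = 1 := by
    rw [dotProduct_mulVec, ← mulVec_transpose, hsym, e1, e4]
  have e6 : u ⬝ᵥ S *ᵥ w = 1 := by rw [e1, e4]
  have e7 : w ⬝ᵥ S *ᵥ w = S⁻¹ r r := by rw [e1, e3]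
  set v : Fin q → ℝ := s⁻¹ • u - w with hv
  have hq : 0 ≤ v ⬝ᵥ S *ᵥ v := by
    have := hS.posSemidef.dotProduct_mulVec_nonneg v
    simpa using this
  have hexpand : v ⬝ᵥ S *ᵥ v
      = s⁻¹ * (s⁻¹ * s) - s⁻¹ * 1 - (s⁻¹ * 1 - S⁻¹ r r) := by
    rw [hv, mulVec_sub, mulVec_smul, sub_dotProduct, smul_dotProduct,
      dotProduct_sub, dotProduct_sub, dotProduct_smul, dotProduct_smul,
      e2, e5, e6, e7]
    simp only [smul_eq_mul]
    ring
  have hinv2 : s⁻¹ * s = 1 := inv_mul_cancel₀ hspos.ne'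
  rw [hexpand, hinv2] at hq
  rw [one_div]
  linarith

/-- For a real symmetric positive definite block matrix `M = [[A, B], [Bᵀ, C]]`,
the block `A` and the Schur complement `C − Bᵀ A⁻¹ B` are positive definite, and every
diagonal entry of the inverse Schur complement satisfies
`((C − Bᵀ A⁻¹ B)⁻¹)_{rr} ≥ 1 / C_{rr}`. -/
theorem schur_complement_inv_diag_ge {p q : ℕ}
    (A : Matrix (Fin p) (Fin p) ℝ) (B : Matrix (Fin p) (Fin q) ℝ)
    (C : Matrix (Fin q) (Fin q) ℝ)
    (hM : (Matrix.fromBlocks A B Bᵀ C).PosDef) :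
    A.PosDef ∧ (C - Bᵀ * A⁻¹ * B).PosDef ∧
      ∀ r : Fin q, 1 / C r r ≤ (C - Bᵀ * A⁻¹ * B)⁻¹ r r := by
  have hBT : (Bᴴ : Matrix (Fin q) (Fin p) ℝ) = Bᵀ := rfl
  -- A is positive definite
  have hAH : A.IsHermitian := by
    have h := hM.1
    rw [IsHermitian, fromBlocks_conjTranspose] at h
    have := congrArg Matrix.toBlocks₁₁ h
    simpa [Matrix.toBlocks_fromBlocks₁₁, IsSymm] using this
  have hA : A.PosDef := by
    refine PosDef.of_dotProduct_mulVec_pos hAH (fun x hx => ?_)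
    have h := hM.dotProduct_mulVec_pos (x := x ⊕ᵥ 0) (by
      intro h0
      apply hx
      funext i
      exact congrFun h0 (Sum.inl i))
    simpa [fromBlocks_mulVec, dotProduct, Fintype.sum_sum_type] using h
  haveI : Invertible A := hA.isUnit.invertible
  -- Schur complement is positive definite
  have hS : (C - Bᵀ * A⁻¹ * B).PosDef := by
    have hSsemi : (C - Bᵀ * A⁻¹ * B).PosSemidef := by
      have := (PosDef.fromBlocks₁₁ B C hA).mp (by rw [hBT]; exact hM.posSemidef)
      rwa [hBT] at this
    refine PosDef.of_dotProduct_mulVec_pos hSsemi.1 (fun y hy => ?_)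
    have h := hM.dotProduct_mulVec_pos (x := -((A⁻¹ * B) *ᵥ y) ⊕ᵥ y) (by
      intro h0
      apply hy
      funext i
      exact congrFun h0 (Sum.inr i))
    rw [dotProduct_mulVec] at h
    rw [← hBT] at h ⊢
    rw [schur_complement_eq₁₁ B C _ _ hAH, neg_add_cancel, dotProduct_zero, zero_add] at h
    rwa [dotProduct_mulVec]
  refine ⟨hA, hS, fun r => ?_⟩
  -- diagonal comparison
  have hle : (C - Bᵀ * A⁻¹ * B) r r ≤ C r r := by
    have hBsemi : (Bᵀ * A⁻¹ * B).PosSemidef := by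
      have := (hA.inv.posSemidef).conjTranspose_mul_mul_same B
      rwa [hBT] at this
    have h := hBsemi.dotProduct_mulVec_nonneg (Pi.single r 1)
    rw [star_trivial, single_quad] at h
    simp only [Matrix.sub_apply]
    linarith
  have h1 := posDef_inv_diag_ge _ hS r
  have hspos : 0 < (C - Bᵀ * A⁻¹ * B) r r := by
    have := hS.dotProduct_mulVec_pos (x := Pi.single r 1) (by intro h; have := congrFun h r; simp at this)
    simpa [single_quad] using this
  calc 1 / C r r ≤ 1 / (C - Bᵀ * A⁻¹ * B) r r :=
        one_div_le_one_div_of_le hspos hle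
    _ ≤ _ := h1
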